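/- arXiv:0905.0412 — 3 statements merged into one kernel-verified Lean document; each statement's English description precedes it below -/
import Mathlib

section
/- For any positive integer i and indeterminates a, q, t, the following terminating sum identity holds: ∑_{k=1}^{i} q^{i-k}(1-a q^{2k}) · ((q^{i-k+1};q)_k/(q^{i-k} t;q)_k) · ((a q^i t;q)_k/(a q^{i+1};q)_k) = ((1-q^i)/(1-t)) · (1-a q^i t), where (x;q)_k = ∏_{j=0}^{k-1}(1-x q^j). -/
open Finset

/-- The q-Pochhammer symbol `(x;q)_k = ∏_{j=0}^{k-1} (1 - x q^j)`. -/
def qPoch {F : Type*} [Field F] (x q : F) (k : ℕ) : F :=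
  ∏ j ∈ Finset.range k, (1 - x * q ^ j)

lemma qPoch_succ {F : Type*} [Field F] (x q : F) (k : ℕ) :
    qPoch x q (k+1) = qPoch x q k * (1 - x * q ^ k) :=
  Finset.prod_range_succ _ _

lemma qPoch_succ' {F : Type*} [Field F] (x q : F) (k : ℕ) :
    qPoch x q (k+1) = (1 - x) * qPoch (x*q) q k := by
  rw [qPoch, Finset.prod_range_succ']
  simp only [pow_zero, mul_one]
  rw [mul_comm]
  congr 1
  apply Finset.prod_congr rfl
  intro j _
  ring

lemma key {F : Type*} [Field F] (a q t : F) (s n : ℕ)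
    (h1 : qPoch (q^n*t) q (s+1) ≠ 0)
    (h2 : qPoch (a*q^(s+1+n+1)) q (s+1) ≠ 0) :
    (1-t) * (q^n * (1 - a*q^(2*(s+1))) *
      (qPoch (q^(n+1)) q (s+1) / qPoch (q^n*t) q (s+1)) *
      (qPoch (a*q^(s+1+n)*t) q (s+1) / qPoch (a*q^(s+1+n+1)) q (s+1)))
    = (1-q^(n+1)) * (1 - a*q^(s+1+n+s)*t) * qPoch (q^(n+2)) q s * qPoch (a*q^(s+1+n)*t) q s
        / (qPoch (q^(n+1)*t) q s * qPoch (a*q^(s+1+n+1)) q s)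
      - (1-q^n) * (1 - a*q^(s+1+n+(s+1))*t) * qPoch (q^(n+1)) q (s+1) * qPoch (a*q^(s+1+n)*t) q (s+1)
        / (qPoch (q^n*t) q (s+1) * qPoch (a*q^(s+1+n+1)) q (s+1)) := by
  have e1 : qPoch (q^(n+1)) q (s+1) = (1 - q^(n+1)) * qPoch (q^(n+2)) q s := by
    rw [qPoch_succ']; ring_nf
  have e2 : qPoch (q^n*t) q (s+1) = (1 - q^n*t) * qPoch (q^(n+1)*t) q s := by
    rw [qPoch_succ']
    congr 2
    ring
  have e3 : qPoch (a*q^(s+1+n)*t) q (s+1)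
      = qPoch (a*q^(s+1+n)*t) q s * (1 - a*q^(s+1+n)*t*q^s) := qPoch_succ _ _ _
  have e4 : qPoch (a*q^(s+1+n+1)) q (s+1)
      = qPoch (a*q^(s+1+n+1)) q s * (1 - a*q^(s+1+n+1)*q^s) := qPoch_succ _ _ _
  rw [e2] at h1 ⊢
  rw [e4] at h2 ⊢
  rw [mul_ne_zero_iff] at h1 h2
  obtain ⟨h1a, h1b⟩ := h1
  obtain ⟨h2a, h2b⟩ := h2
  rw [e1, e3]
  have h1a' : 1 - t * q ^ n ≠ 0 := by rwa [mul_comm t]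
  have h1b' : qPoch (t * q ^ (n + 1)) q s ≠ 0 := by rwa [mul_comm t]
  have h2b' : 1 - a * q ^ s * q ^ (s + 1 + n + 1) ≠ 0 := by rwa [mul_assoc, mul_comm (q ^ (s + 1 + n + 1)), ← mul_assoc] at h2b
  field_simp
  ring

/-- The telescoping remainder. -/
def Gfun {F : Type*} [Field F] (a q t : F) (i k : ℕ) : F :=
  (1 - q ^ (i - k)) * (1 - a * q ^ (i + k) * t) * qPoch (q ^ (i - k + 1)) q k
      * qPoch (a * q ^ i * t) q k
    / (qPoch (q ^ (i - k) * t) q k * qPoch (a * q ^ (i + 1)) q k)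


/-- Terminating very-well-poised ₆φ₅ summation, in the form
`∑_{k=1}^i q^{i-k}(1-aq^{2k}) ((q^{i-k+1};q)_k/(q^{i-k}t;q)_k) ((aq^i t;q)_k/(aq^{i+1};q)_k)
  = ((1-q^i)/(1-t)) (1-aq^i t)`. -/
theorem stmt0 {F : Type*} [Field F] (a q t : F) (i : ℕ) (hi : 0 < i)
    (ht : 1 - t ≠ 0)
    (hden1 : ∀ k ∈ Finset.Icc 1 i, qPoch (q ^ (i - k) * t) q k ≠ 0)
    (hden2 : ∀ k ∈ Finset.Icc 1 i, qPoch (a * q ^ (i + 1)) q k ≠ 0) :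
    ∑ k ∈ Finset.Icc 1 i,
      q ^ (i - k) * (1 - a * q ^ (2 * k)) *
        (qPoch (q ^ (i - k + 1)) q k / qPoch (q ^ (i - k) * t) q k) *
        (qPoch (a * q ^ i * t) q k / qPoch (a * q ^ (i + 1)) q k)
      = (1 - q ^ i) / (1 - t) * (1 - a * q ^ i * t) := by
  have main : ∀ m, m ≤ i → ∑ k ∈ Finset.Icc 1 m,
      q ^ (i - k) * (1 - a * q ^ (2 * k)) *
        (qPoch (q ^ (i - k + 1)) q k / qPoch (q ^ (i - k) * t) q k) *
        (qPoch (a * q ^ i * t) q k / qPoch (a * q ^ (i + 1)) q k)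
      = (Gfun a q t i 0 - Gfun a q t i m) / (1 - t) := by
    intro m
    induction m with
    | zero => intro _; simp
    | succ s ih =>
      intro hsi
      have hsi' : s ≤ i := by omega
      obtain ⟨n, hn⟩ : ∃ n, i = s + 1 + n := ⟨i - (s + 1), by omega⟩
      have h1 : qPoch (q ^ (i - (s+1)) * t) q (s+1) ≠ 0 :=
        hden1 (s+1) (Finset.mem_Icc.2 ⟨by omega, hsi⟩)
      have h2 : qPoch (a * q ^ (i + 1)) q (s+1) ≠ 0 :=
        hden2 (s+1) (Finset.mem_Icc.2 ⟨by omega, hsi⟩)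
      have en : i - (s+1) = n := by omega
      rw [en] at h1
      have hkey := key a q t s n h1 (by rw [← hn]; exact h2)
      have hstep : q ^ (i - (s+1)) * (1 - a * q ^ (2 * (s+1))) *
          (qPoch (q ^ (i - (s+1) + 1)) q (s+1) / qPoch (q ^ (i - (s+1)) * t) q (s+1)) *
          (qPoch (a * q ^ i * t) q (s+1) / qPoch (a * q ^ (i + 1)) q (s+1))
          = (Gfun a q t i s - Gfun a q t i (s+1)) / (1 - t) := by
        rw [eq_div_iff ht, mul_comm]
        unfold Gfun
        have e1 : i - s = n + 1 := by omega
        have e3 : i + s = s + 1 + n + s := by omega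
        have e4 : i + (s+1) = s + 1 + n + (s+1) := by omega
        rw [en, e1, e3, e4, show n+1+1 = n+2 from by omega]
        rw [hn]
        exact hkey
      rw [Finset.sum_Icc_succ_top (by omega : 1 ≤ s + 1), ih hsi', hstep,
        ← add_div]
      ring_nf
  have hG0 : Gfun a q t i 0 = (1 - q ^ i) * (1 - a * q ^ i * t) := by
    simp [Gfun, qPoch]
  have hGi : Gfun a q t i i = 0 := by
    simp [Gfun]
  rw [main i le_rfl, hG0, hGi]
  field_simp
  ring
end

section
/- Let x_1,…,x_n be indeterminates. Then ∑_{σ ∈ {-1,+1}^n} ∏_{i=1}^n (1 - t x_i^{2σ_i})/(1 - x_i^{2σ_i}) · ∏_{1 ≤ i < j ≤ n} (1 - t x_i^{σ_i} x_j^{σ_j})/(1 - x_i^{σ_i} x_j^{σ_j}) = ∏_{i=1}^{n}(t^i + 1). -/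
open Finset

/-- `x_i^{σ_i}`: the variable `x i` raised to the sign `σ i` (`true` = `+1`). -/
def sgnVar {F : Type*} [Field F] {n : ℕ} (x : Fin n → F) (σ : Fin n → Bool) (i : Fin n) : F :=
  if σ i then x i else (x i)⁻¹

namespace Stmt5Aux

variable {F : Type*} [Field F]

def sf (t u : F) : F := (1 - t * u ^ 2) / (1 - u ^ 2)

def cf (t u v : F) : F := (1 - t * u * v) / (1 - u * v)

lemma cf_comm (t u v : F) : cf t u v = cf t v u := by
  unfold cf; rw [mul_comm u v, mul_assoc, mul_comm u v, ← mul_assoc]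

def Bs (t : F) {ι : Type*} (y : ι → F) (s : Finset ι) (X : F) : F :=
  sf t X * ∏ k ∈ s, cf t (y k) X

def dl (t : F) {ι : Type*} [DecidableEq ι] (y : ι → F) (s : Finset ι) (i : ι) : F :=
  (1 - t) * sf t (y i)⁻¹ * ∏ k ∈ s.erase i, cf t (y k) (y i)⁻¹

def Gf (y X : F) : F := 1 / (1 - y * X) + 1 / (1 - y * X⁻¹) - 1

lemma one_sub_inv_sq_ne {Z : F} (hZ2 : 1 - Z ^ 2 ≠ 0) : 1 - (Z⁻¹) ^ 2 ≠ 0 := by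
  rw [inv_pow, sub_ne_zero]
  intro h
  exact hZ2 (by rw [inv_eq_one.mp h.symm]; ring)

lemma claim1 {δ yi Z X t : F} (hyi0 : yi ≠ 0) (hZ0 : Z ≠ 0)
    (h1 : 1 - yi * X ≠ 0) (h2 : 1 - Z * X ≠ 0)
    (hd1 : 1 - Z * yi⁻¹ ≠ 0) (hd2 : 1 - yi * Z⁻¹ ≠ 0) :
    δ / (1 - yi * X) * ((1 - t * Z * X) / (1 - Z * X))
      = δ * ((1 - t * Z * yi⁻¹) / (1 - Z * yi⁻¹)) / (1 - yi * X)
        + δ / (1 - yi * Z⁻¹) * ((1 - t) / (1 - Z * X)) := by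
  have hyZ : yi - Z ≠ 0 := by
    intro h
    apply hd1
    rw [show Z = yi by linear_combination -h, mul_inv_cancel₀ hyi0]
    ring
  have hZy : Z - yi ≠ 0 := fun h => hyZ (by linear_combination -h)
  have e1 : (1 - t * Z * yi⁻¹) / (1 - Z * yi⁻¹) = (yi - t * Z) / (yi - Z) := by
    rw [div_eq_div_iff hd1 hyZ]
    field_simp
  have e2 : δ / (1 - yi * Z⁻¹) = δ * (Z / (Z - yi)) := by
    have h3 : 1 - yi * Z⁻¹ = (Z - yi) / Z := by field_simp
    rw [h3, div_div_eq_mul_div, mul_div_assoc]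
  have h2' : 1 - X * Z ≠ 0 := by rwa [mul_comm]
  have h1' : 1 - X * yi ≠ 0 := by rwa [mul_comm]
  rw [e1, e2]
  field_simp
  ring

lemma claim2 {c a₀ a₁ v Z X t : F}
    (hX2 : 1 - X ^ 2 ≠ 0) (hZX : 1 - Z * X ≠ 0)
    (hv : v * (Z ^ 2 - 1) = a₀ * Z + a₁) :
    (c + (a₀ + a₁ * X) / (1 - X ^ 2)) * ((1 - t * Z * X) / (1 - Z * X))
      = t * c
        + ((t * a₀ + (1 - t) * (a₀ - Z * v)) + (t * a₁ - (1 - t) * v) * X) / (1 - X ^ 2)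
        + (1 - t) * (c + Z * v) / (1 - Z * X) := by
  have hZX' : 1 - X * Z ≠ 0 := by rwa [mul_comm]
  field_simp
  linear_combination (t - 1) * X * hv


lemma hw_eq {a₀ a₁ Z : F} (hZ0 : Z ≠ 0) (hZ2 : 1 - Z ^ 2 ≠ 0) :
    Z * (a₀ * Z + a₁) / (Z ^ 2 - 1) = (a₀ + a₁ * Z⁻¹) / (1 - (Z⁻¹) ^ 2) := by
  have hZ2' : Z ^ 2 - 1 ≠ 0 := fun h => hZ2 (by linear_combination -h)
  have h3 : 1 - (Z⁻¹) ^ 2 ≠ 0 := one_sub_inv_sq_ne hZ2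
  rw [div_eq_div_iff hZ2' h3]
  field_simp

lemma star {ι : Type*} [DecidableEq ι] (t : F) (y : ι → F) (s : Finset ι)
    (hy0 : ∀ i ∈ s, y i ≠ 0) (hy1 : ∀ i ∈ s, 1 - (y i) ^ 2 ≠ 0)
    (hyy : ∀ i ∈ s, ∀ j ∈ s, i ≠ j → y i ≠ y j) :
    ∃ a₀ a₁ : F, ∀ X : F, 1 - X ^ 2 ≠ 0 → (∀ i ∈ s, 1 - y i * X ≠ 0) →
      Bs t y s X = t ^ (s.card + 1) + (a₀ + a₁ * X) / (1 - X ^ 2)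
        + ∑ i ∈ s, dl t y s i / (1 - y i * X) := by
  classical
  induction s using Finset.induction_on with
  | empty =>
      refine ⟨1 - t, 0, fun X hX2 _ => ?_⟩
      simp only [Bs, sf, prod_empty, sum_empty, card_empty, mul_one, pow_one, add_zero,
        zero_mul, zero_add, Nat.zero_add]
      rw [div_eq_iff hX2, add_mul, div_mul_cancel₀ _ hX2]
      ring
  | @insert a s ha ih =>
      have hy0' : ∀ i ∈ s, y i ≠ 0 := fun i hi => hy0 i (mem_insert_of_mem hi)
      have hy1' : ∀ i ∈ s, 1 - (y i) ^ 2 ≠ 0 := fun i hi => hy1 i (mem_insert_of_mem hi)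
      have hyy' : ∀ i ∈ s, ∀ j ∈ s, i ≠ j → y i ≠ y j := fun i hi j hj hij =>
        hyy i (mem_insert_of_mem hi) j (mem_insert_of_mem hj) hij
      obtain ⟨a₀, a₁, H⟩ := ih hy0' hy1' hyy'
      have hamem : a ∈ insert a s := mem_insert_self a s
      have hZ0 : y a ≠ 0 := hy0 a hamem
      have hZ2 : 1 - (y a) ^ 2 ≠ 0 := hy1 a hamem
      have hZ2' : (y a) ^ 2 - 1 ≠ 0 := fun h => hZ2 (by linear_combination -h)
      have hZi2 : 1 - ((y a)⁻¹) ^ 2 ≠ 0 := one_sub_inv_sq_ne hZ2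
      have hyZ : ∀ i ∈ s, 1 - y i * (y a)⁻¹ ≠ 0 := by
        intro i hi
        have hia : i ≠ a := fun h => ha (h ▸ hi)
        have hne : y i ≠ y a := hyy i (mem_insert_of_mem hi) a hamem hia
        intro h
        rw [sub_eq_zero, eq_comm, ← div_eq_mul_inv, div_eq_one_iff_eq hZ0] at h
        exact hne h
      have hZy : ∀ i ∈ s, 1 - y a * (y i)⁻¹ ≠ 0 := by
        intro i hi
        have hia : i ≠ a := fun h => ha (h ▸ hi)
        have hne : y a ≠ y i := hyy a hamem i (mem_insert_of_mem hi) hia.symm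
        intro h
        rw [sub_eq_zero, eq_comm, ← div_eq_mul_inv, div_eq_one_iff_eq (hy0' i hi)] at h
        exact hne h
      set v : F := (a₀ * y a + a₁) / ((y a) ^ 2 - 1) with hvdef
      have hv : v * ((y a) ^ 2 - 1) = a₀ * y a + a₁ := div_mul_cancel₀ _ hZ2'
      have EW : y a * v = (a₀ + a₁ * (y a)⁻¹) / (1 - ((y a)⁻¹) ^ 2) := by
        rw [hvdef, mul_div_assoc']
        exact hw_eq hZ0 hZ2
      refine ⟨t * a₀ + (1 - t) * (a₀ - y a * v), t * a₁ - (1 - t) * v, ?_⟩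
      intro X hX2 hXall
      have hZX : 1 - y a * X ≠ 0 := hXall a hamem
      have hsX : ∀ i ∈ s, 1 - y i * X ≠ 0 := fun i hi => hXall i (mem_insert_of_mem hi)
      have HX := H X hX2 hsX
      have HZ := H (y a)⁻¹ hZi2 hyZ
      have hdl_a : dl t y (insert a s) a = (1 - t) * Bs t y s (y a)⁻¹ := by
        rw [dl, Bs, erase_insert ha]; ring
      have hdl_i : ∀ i ∈ s, dl t y (insert a s) i = dl t y s i * cf t (y a) (y i)⁻¹ := by
        intro i hi
        have hia : a ≠ i := fun h => ha (h ▸ hi)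
        rw [dl, dl, Finset.erase_insert_of_ne hia,
          prod_insert (fun h => ha (mem_of_mem_erase h))]
        ring
      have Esum : (∑ i ∈ s, dl t y s i / (1 - y i * X)) * ((1 - t * y a * X) / (1 - y a * X))
          = (∑ i ∈ s, dl t y (insert a s) i / (1 - y i * X))
            + (∑ i ∈ s, dl t y s i / (1 - y i * (y a)⁻¹)) * ((1 - t) / (1 - y a * X)) := by
        rw [sum_mul]
        rw [show (∑ i ∈ s, dl t y (insert a s) i / (1 - y i * X))
              + (∑ i ∈ s, dl t y s i / (1 - y i * (y a)⁻¹)) * ((1 - t) / (1 - y a * X))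
            = ∑ i ∈ s, (dl t y (insert a s) i / (1 - y i * X)
              + dl t y s i / (1 - y i * (y a)⁻¹) * ((1 - t) / (1 - y a * X))) by
          rw [sum_add_distrib, sum_mul]]
        refine sum_congr rfl fun i hi => ?_
        rw [hdl_i i hi]
        exact claim1 (hy0' i hi) hZ0 (hsX i hi) hZX (hZy i hi) (hyZ i hi)
      have Ecl2 := claim2 (c := t ^ (s.card + 1)) (a₀ := a₀) (a₁ := a₁) (t := t)
        hX2 hZX hv
      -- unfold the head of the product
      have hBX : Bs t y (insert a s) X = Bs t y s X * ((1 - t * y a * X) / (1 - y a * X)) := by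
        rw [Bs, Bs, prod_insert ha, cf]; ring
      rw [hBX, sum_insert ha, card_insert_of_notMem ha, hdl_a]
      rw [show s.card + 1 + 1 = (s.card + 1) + 1 from rfl, pow_succ]
      linear_combination ((1 - t * y a * X) / (1 - y a * X)) * HX + Ecl2 + Esum
        - ((1 - t) / (1 - y a * X)) * HZ + ((1 - t) / (1 - y a * X)) * EW

/-- The symmetrized partial fraction expansion. -/
lemma starSum {ι : Type*} [DecidableEq ι] (t : F) (y : ι → F) (s : Finset ι)
    (hy0 : ∀ i ∈ s, y i ≠ 0) (hy1 : ∀ i ∈ s, 1 - (y i) ^ 2 ≠ 0)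
    (hyy : ∀ i ∈ s, ∀ j ∈ s, i ≠ j → y i ≠ y j)
    (X : F) (hX0 : X ≠ 0) (hX2 : 1 - X ^ 2 ≠ 0)
    (hXy : ∀ i ∈ s, 1 - y i * X ≠ 0) (hXy' : ∀ i ∈ s, 1 - y i * X⁻¹ ≠ 0) :
    Bs t y s X + Bs t y s X⁻¹
      = (t ^ (s.card + 1) + 1) + ∑ i ∈ s, dl t y s i * Gf (y i) X := by
  obtain ⟨a₀, a₁, H⟩ := star t y s hy0 hy1 hyy
  have hX2i : 1 - (X⁻¹) ^ 2 ≠ 0 := one_sub_inv_sq_ne hX2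
  have H1 := H X hX2 hXy
  have H2 := H X⁻¹ hX2i hXy'
  have H0 := H 0 (by norm_num) (fun i hi => by norm_num)
  have hB0 : Bs t y s 0 = 1 := by
    simp [Bs, sf, cf]
  rw [hB0] at H0
  simp only [mul_zero, add_zero, sub_zero, div_one, ne_eq, OfNat.ofNat_ne_zero,
    not_false_eq_true, zero_pow, zero_mul] at H0
  have hmid : (a₀ + a₁ * X) / (1 - X ^ 2) + (a₀ + a₁ * X⁻¹) / (1 - (X⁻¹) ^ 2) = a₀ := by
    have hX2' : X ^ 2 - 1 ≠ 0 := fun h => hX2 (by linear_combination -h)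
    have h1 : (a₀ + a₁ * X⁻¹) / (1 - (X⁻¹) ^ 2) = (a₀ * X + a₁) * X / (X ^ 2 - 1) := by
      rw [div_eq_div_iff hX2i hX2']
      field_simp
    rw [h1, div_add_div _ _ hX2 hX2', div_eq_iff (mul_ne_zero hX2 hX2')]
    ring
  have Esplit : ∑ i ∈ s, dl t y s i * Gf (y i) X
      = (∑ i ∈ s, dl t y s i / (1 - y i * X)) + (∑ i ∈ s, dl t y s i / (1 - y i * X⁻¹))
        - ∑ i ∈ s, dl t y s i := by
    rw [← sum_add_distrib, ← sum_sub_distrib]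
    refine sum_congr rfl fun i hi => ?_
    unfold Gf
    ring
  rw [Esplit]
  linear_combination H1 + H2 - H0 + hmid

/-- `G` flips sign when `y` is inverted. -/
lemma Gf_inv {y X : F} (hy0 : y ≠ 0) (hX0 : X ≠ 0)
    (h1 : 1 - y * X ≠ 0) (h2 : 1 - y * X⁻¹ ≠ 0) :
    Gf y⁻¹ X = - Gf y X := by
  have h3 : 1 - y⁻¹ * X ≠ 0 := by
    intro h
    rw [sub_eq_zero, eq_comm, mul_comm, ← div_eq_mul_inv, div_eq_one_iff_eq hy0] at h
    exact h2 (by rw [h, mul_inv_cancel₀ hy0]; ring)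
  have h4 : 1 - y⁻¹ * X⁻¹ ≠ 0 := by
    intro h
    rw [sub_eq_zero, ← mul_inv, eq_comm, inv_eq_one] at h
    exact h1 (by rw [sub_eq_zero, mul_comm] at *; exact h.symm)
  have hyX : y - X ≠ 0 := by
    intro h
    exact h2 (by rw [show y = X from by linear_combination h, mul_inv_cancel₀ hX0]; ring)
  have hXy : X - y ≠ 0 := fun h => hyX (by linear_combination -h)
  have hyX1 : y * X - 1 ≠ 0 := fun h => h1 (by linear_combination -h)
  have e1 : 1 / (1 - y⁻¹ * X) = y / (y - X) := by
    rw [div_eq_div_iff h3 hyX]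
    field_simp
  have e2 : 1 / (1 - y⁻¹ * X⁻¹) = y * X / (y * X - 1) := by
    rw [div_eq_div_iff h4 hyX1]
    field_simp
  have e3 : 1 / (1 - y * X⁻¹) = X / (X - y) := by
    rw [div_eq_div_iff h2 hXy]
    field_simp
  unfold Gf
  rw [e1, e2, e3]
  field_simp
  ring

/-- Extracting the factors involving index `i` from a product over pairs. -/
lemma extract {n : ℕ} (g : Fin n → Fin n → F) (hg : ∀ k l, g k l = g l k) (i : Fin n) :
    ∏ k, ∏ l ∈ Ioi k, g k l
      = ((∏ k ∈ univ.erase i, ∏ l ∈ (Ioi k).erase i, g k l) * ∏ k ∈ univ.erase i, g i k) := by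
  rw [← Finset.mul_prod_erase univ _ (mem_univ i)]
  have h1 : ∀ k ∈ univ.erase i, (∏ l ∈ Ioi k, g k l)
      = (∏ l ∈ (Ioi k).erase i, g k l) * (if k < i then g k i else 1) := by
    intro k hk
    by_cases hki : k < i
    · rw [if_pos hki, ← Finset.mul_prod_erase (Ioi k) _ (mem_Ioi.mpr hki), mul_comm]
    · rw [if_neg hki, mul_one, Finset.erase_eq_of_notMem (by simp [mem_Ioi, hki])]
  rw [prod_congr rfl h1, prod_mul_distrib]
  have h2 : (∏ k ∈ univ.erase i, if k < i then g k i else 1) = ∏ k ∈ Iio i, g i k := by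
    rw [← prod_filter]
    refine prod_congr ?_ fun k _ => hg k i
    ext k
    simp only [mem_filter, mem_erase, mem_univ, and_true, true_and, mem_Iio]
    exact ⟨fun h => h.2, fun h => ⟨ne_of_lt h, h⟩⟩
  have h3 : (∏ k ∈ Iio i, g i k) * ∏ k ∈ Ioi i, g i k = ∏ k ∈ univ.erase i, g i k := by
    rw [← prod_union (by
      simp only [disjoint_left, mem_Iio, mem_Ioi]
      exact fun a h h' => absurd h' (not_lt.mpr h.le))]
    refine prod_congr ?_ fun _ _ => rfl
    ext k
    simp only [mem_union, mem_Iio, mem_Ioi, mem_erase, mem_univ, and_true]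
    exact lt_or_lt_iff_ne
  rw [h2]
  rw [← h3]
  ring

/-- `A·δᵢ` is invariant under inverting `y i`. -/
lemma ADinv (t : F) {n : ℕ} (y : Fin n → F) (i : Fin n) :
    ((∏ k, sf t (Function.update y i (y i)⁻¹ k))
        * ∏ k, ∏ l ∈ Ioi k, cf t (Function.update y i (y i)⁻¹ k) (Function.update y i (y i)⁻¹ l))
      * dl t (Function.update y i (y i)⁻¹) univ i
    = ((∏ k, sf t (y k)) * ∏ k, ∏ l ∈ Ioi k, cf t (y k) (y l)) * dl t y univ i := by
  classical
  set y' := Function.update y i (y i)⁻¹ with hy'def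
  have hy'i : y' i = (y i)⁻¹ := Function.update_self i _ y
  have hy'k : ∀ k, k ≠ i → y' k = y k := fun k hk => Function.update_of_ne hk _ y
  -- singles
  have S1 : (∏ k, sf t (y' k)) = sf t (y i)⁻¹ * ∏ k ∈ univ.erase i, sf t (y k) := by
    rw [← Finset.mul_prod_erase univ _ (mem_univ i), hy'i]
    congr 1
    exact prod_congr rfl fun k hk => by rw [hy'k k (mem_erase.mp hk).1]
  have S2 : (∏ k, sf t (y k)) = sf t (y i) * ∏ k ∈ univ.erase i, sf t (y k) := by
    rw [← Finset.mul_prod_erase univ _ (mem_univ i)]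
  -- pairs
  have P1 : (∏ k, ∏ l ∈ Ioi k, cf t (y' k) (y' l))
      = (∏ k ∈ univ.erase i, ∏ l ∈ (Ioi k).erase i, cf t (y k) (y l))
        * ∏ k ∈ univ.erase i, cf t (y i)⁻¹ (y k) := by
    rw [extract _ (fun k l => cf_comm t (y' k) (y' l)) i]
    congr 1
    · refine prod_congr rfl fun k hk => prod_congr rfl fun l hl => ?_
      rw [hy'k k (mem_erase.mp hk).1, hy'k l (mem_erase.mp hl).1]
    · refine prod_congr rfl fun k hk => ?_
      rw [hy'i, hy'k k (mem_erase.mp hk).1]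
  have P2 : (∏ k, ∏ l ∈ Ioi k, cf t (y k) (y l))
      = (∏ k ∈ univ.erase i, ∏ l ∈ (Ioi k).erase i, cf t (y k) (y l))
        * ∏ k ∈ univ.erase i, cf t (y i) (y k) := by
    exact extract _ (fun k l => cf_comm t (y k) (y l)) i
  -- dl's
  have D1 : dl t y' univ i = (1 - t) * sf t (y i) * ∏ k ∈ univ.erase i, cf t (y k) (y i) := by
    rw [dl, hy'i, inv_inv]
    congr 1
    exact prod_congr rfl fun k hk => by rw [hy'k k (mem_erase.mp hk).1]
  have D2 : dl t y univ i = (1 - t) * sf t (y i)⁻¹ * ∏ k ∈ univ.erase i, cf t (y k) (y i)⁻¹ := by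
    rw [dl]
  have C1 : (∏ k ∈ univ.erase i, cf t (y i)⁻¹ (y k)) = ∏ k ∈ univ.erase i, cf t (y k) (y i)⁻¹ :=
    prod_congr rfl fun k _ => cf_comm t _ _
  have C2 : (∏ k ∈ univ.erase i, cf t (y i) (y k)) = ∏ k ∈ univ.erase i, cf t (y k) (y i) :=
    prod_congr rfl fun k _ => cf_comm t _ _
  rw [S1, S2, P1, P2, D1, D2, C1, C2]
  ring


lemma pairSplit0 {M : Type*} [CommMonoid M] {n : ℕ} (g : Fin (n + 1) → Fin (n + 1) → M) :
    ∏ i, ∏ j ∈ Ioi i, g i j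
      = (∏ j : Fin n, g 0 j.succ) * ∏ i : Fin n, ∏ j ∈ Ioi i, g i.succ j.succ := by
  rw [Fin.prod_univ_succ]
  congr 1
  · exact Fin.prod_Ioi_zero _
  · exact prod_congr rfl fun i _ => Fin.prod_Ioi_succ _ i

lemma sgn_cases {n : ℕ} (x : Fin n → F) (σ : Fin n → Bool) (i : Fin n) :
    sgnVar x σ i = x i ∨ sgnVar x σ i = (x i)⁻¹ := by
  unfold sgnVar; by_cases h : σ i <;> simp [h]

lemma mix_ne {a b : F} (ha : a ≠ 0) (hb : b ≠ 0) (h1 : a * b ≠ 1) (h2 : a ≠ b) :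
    1 - a * b ≠ 0 ∧ 1 - a * b⁻¹ ≠ 0 ∧ 1 - a⁻¹ * b ≠ 0 ∧ 1 - a⁻¹ * b⁻¹ ≠ 0 := by
  refine ⟨fun H => h1 (by linear_combination -H), ?_, ?_, ?_⟩
  · intro H
    rw [sub_eq_zero, eq_comm, ← div_eq_mul_inv, div_eq_one_iff_eq hb] at H
    exact h2 H
  · intro H
    rw [sub_eq_zero, eq_comm, mul_comm, ← div_eq_mul_inv, div_eq_one_iff_eq ha] at H
    exact h2 H.symm
  · intro H
    rw [sub_eq_zero, ← mul_inv, eq_comm, inv_eq_one] at H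
    exact h1 H

theorem key (n : ℕ) : ∀ (x : Fin n → F) (t : F),
    (∀ i, x i ≠ 0) → (∀ i, (x i) ^ 2 ≠ 1) →
    (∀ i j, i ≠ j → x i * x j ≠ 1 ∧ x i ≠ x j) →
    ∑ σ : Fin n → Bool,
      (∏ i, sf t (sgnVar x σ i)) * ∏ i, ∏ j ∈ Ioi i, cf t (sgnVar x σ i) (sgnVar x σ j)
      = ∏ i ∈ range n, (t ^ (i + 1) + 1) := by
  induction n with
  | zero => intro x t _ _ _; simp
  | succ n ih =>
    intro x t hx0 hx2 hxx
    have hx0' : ∀ i : Fin n, x i.succ ≠ 0 := fun i => hx0 i.succ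
    have hx2' : ∀ i : Fin n, (x i.succ) ^ 2 ≠ 1 := fun i => hx2 i.succ
    have hxx' : ∀ i j : Fin n, i ≠ j → x i.succ * x j.succ ≠ 1 ∧ x i.succ ≠ x j.succ :=
      fun i j hij => hxx i.succ j.succ (fun h => hij (Fin.succ_injective n h))
    have hX0 : x 0 ≠ 0 := hx0 0
    have hX0i : (x 0)⁻¹ ≠ 0 := inv_ne_zero hX0
    have hX2 : 1 - (x 0) ^ 2 ≠ 0 := fun h => hx2 0 (by linear_combination -h)
    have hX2i : 1 - ((x 0)⁻¹) ^ 2 ≠ 0 := one_sub_inv_sq_ne hX2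
    -- the `y` data for a given sign vector on the tail
    have hy0 : ∀ (σ' : Fin n → Bool) (k : Fin n), sgnVar (fun k => x k.succ) σ' k ≠ 0 := by
      intro σ' k
      rcases sgn_cases (fun k => x k.succ) σ' k with h | h <;> rw [h]
      · exact hx0' k
      · exact inv_ne_zero (hx0' k)
    have hy1 : ∀ (σ' : Fin n → Bool) (k : Fin n),
        1 - (sgnVar (fun k => x k.succ) σ' k) ^ 2 ≠ 0 := by
      intro σ' k
      rcases sgn_cases (fun k => x k.succ) σ' k with h | h <;> rw [h]
      · exact fun H => hx2' k (by linear_combination -H)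
      · exact one_sub_inv_sq_ne (fun H => hx2' k (by linear_combination -H))
    have hyy : ∀ (σ' : Fin n → Bool) (k l : Fin n), k ≠ l →
        sgnVar (fun k => x k.succ) σ' k ≠ sgnVar (fun k => x k.succ) σ' l := by
      intro σ' k l hkl
      obtain ⟨h1, h2⟩ := hxx' k l hkl
      rcases sgn_cases (fun k => x k.succ) σ' k with h | h <;>
        rcases sgn_cases (fun k => x k.succ) σ' l with h' | h' <;> rw [h, h']
      · exact h2
      · intro H; exact h1 (by rw [H, inv_mul_cancel₀ (hx0' l)])
      · intro H; exact h1 (by rw [← H, mul_inv_cancel₀ (hx0' k)])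
      · exact fun H => h2 (inv_injective H)
    have hcross : ∀ (σ' : Fin n → Bool) (k : Fin n),
        (1 - sgnVar (fun k => x k.succ) σ' k * (x 0) ≠ 0)
          ∧ (1 - sgnVar (fun k => x k.succ) σ' k * (x 0)⁻¹ ≠ 0) := by
      intro σ' k
      have hm := mix_ne (hx0' k) hX0 (hxx k.succ 0 (Fin.succ_ne_zero k)).1
        (hxx k.succ 0 (Fin.succ_ne_zero k)).2
      rcases sgn_cases (fun k => x k.succ) σ' k with h | h <;> rw [h]
      · exact ⟨hm.1, hm.2.1⟩
      · exact ⟨hm.2.2.1, hm.2.2.2⟩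
    -- the symmetrized expansion, for each tail sign vector
    have SS : ∀ σ' : Fin n → Bool,
        Bs t (sgnVar (fun k => x k.succ) σ') univ (x 0)
          + Bs t (sgnVar (fun k => x k.succ) σ') univ (x 0)⁻¹
        = (t ^ (n + 1) + 1) + ∑ i, dl t (sgnVar (fun k => x k.succ) σ') univ i
            * Gf (sgnVar (fun k => x k.succ) σ' i) (x 0) := by
      intro σ'
      have := starSum t (sgnVar (fun k => x k.succ) σ') univ
        (fun i _ => hy0 σ' i) (fun i _ => hy1 σ' i)
        (fun i _ j _ hij => hyy σ' i j hij)
        (x 0) hX0 hX2 (fun i _ => (hcross σ' i).1) (fun i _ => (hcross σ' i).2)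
      rwa [Finset.card_fin] at this
    -- the local involution: flipping the sign of one tail coordinate
    have Ezero : ∑ σ' : Fin n → Bool, ∑ i : Fin n,
        (((∏ k, sf t (sgnVar (fun k => x k.succ) σ' k))
            * ∏ k, ∏ l ∈ Ioi k, cf t (sgnVar (fun k => x k.succ) σ' k)
                (sgnVar (fun k => x k.succ) σ' l))
          * dl t (sgnVar (fun k => x k.succ) σ') univ i)
          * Gf (sgnVar (fun k => x k.succ) σ' i) (x 0) = 0 := by
      rw [Finset.sum_comm]
      refine sum_eq_zero fun i _ => ?_
      refine Finset.sum_ninvolution (fun σ' => Function.update σ' i (!σ' i)) ?_ ?_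
        (fun _ => mem_univ _) ?_
      · intro σ'
        have hupd : sgnVar (fun k => x k.succ) (Function.update σ' i (!σ' i))
            = Function.update (sgnVar (fun k => x k.succ) σ') i
                ((sgnVar (fun k => x k.succ) σ' i)⁻¹) := by
          funext k
          rcases eq_or_ne k i with rfl | hk
          · unfold sgnVar
            rw [Function.update_self, Function.update_self]
            cases h : σ' k <;> simp [h]
          · unfold sgnVar
            rw [Function.update_of_ne hk, Function.update_of_ne hk]
        rw [hupd, ADinv t (sgnVar (fun k => x k.succ) σ') i, Function.update_self,
          Gf_inv (hy0 σ' i) hX0 (hcross σ' i).1 (hcross σ' i).2]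
        ring
      · intro σ' _ heq
        have h := congrFun heq i
        simp only [Function.update_self] at h
        revert h
        cases σ' i <;> simp
      · intro σ'
        funext k
        rcases eq_or_ne k i with rfl | hk
        · simp [Function.update_self, Bool.not_not]
        · simp [Function.update_of_ne hk]
    -- splitting off the head coordinate of each summand
    have EB : ∀ (b : Bool) (σ' : Fin n → Bool),
        (∏ i, sf t (sgnVar x (Fin.cons b σ') i))
          * ∏ i, ∏ j ∈ Ioi i, cf t (sgnVar x (Fin.cons b σ') i) (sgnVar x (Fin.cons b σ') j)
        = ((∏ k, sf t (sgnVar (fun k => x k.succ) σ' k))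
            * ∏ k, ∏ l ∈ Ioi k, cf t (sgnVar (fun k => x k.succ) σ' k)
                (sgnVar (fun k => x k.succ) σ' l))
          * (sf t (sgnVar x (Fin.cons b σ') 0)
            * ∏ k, cf t (sgnVar (fun k => x k.succ) σ' k) (sgnVar x (Fin.cons b σ') 0)) := by
      intro b σ'
      have hsucc : ∀ k : Fin n,
          sgnVar x (Fin.cons b σ') k.succ = sgnVar (fun k => x k.succ) σ' k := by
        intro k; unfold sgnVar; rw [Fin.cons_succ]
      rw [Fin.prod_univ_succ (f := fun i => sf t (sgnVar x (Fin.cons b σ') i)),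
        pairSplit0 (g := fun i j => cf t (sgnVar x (Fin.cons b σ') i) (sgnVar x (Fin.cons b σ') j))]
      simp only [hsucc]
      rw [show (∏ k : Fin n, cf t (sgnVar x (Fin.cons b σ') 0) (sgnVar (fun k => x k.succ) σ' k))
          = ∏ k : Fin n, cf t (sgnVar (fun k => x k.succ) σ' k) (sgnVar x (Fin.cons b σ') 0) from
        prod_congr rfl fun k _ => cf_comm t _ _]
      ring
    -- reindex the sum over all sign vectors
    rw [← Equiv.sum_comp (Fin.consEquiv fun _ : Fin (n + 1) => Bool)
      (fun σ => (∏ i, sf t (sgnVar x σ i))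
        * ∏ i, ∏ j ∈ Ioi i, cf t (sgnVar x σ i) (sgnVar x σ j)), Fintype.sum_prod_type]
    simp only [show ∀ (b : Bool) (σ' : Fin n → Bool),
      (Fin.consEquiv fun _ : Fin (n + 1) => Bool) (b, σ') = Fin.cons b σ' from fun _ _ => rfl]
    rw [Finset.sum_comm]
    calc ∑ σ' : Fin n → Bool, ∑ b : Bool,
          (∏ i, sf t (sgnVar x (Fin.cons b σ') i))
            * ∏ i, ∏ j ∈ Ioi i, cf t (sgnVar x (Fin.cons b σ') i) (sgnVar x (Fin.cons b σ') j)
        = ∑ σ' : Fin n → Bool,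
            ((∏ k, sf t (sgnVar (fun k => x k.succ) σ' k))
              * ∏ k, ∏ l ∈ Ioi k, cf t (sgnVar (fun k => x k.succ) σ' k)
                  (sgnVar (fun k => x k.succ) σ' l))
            * ((t ^ (n + 1) + 1) + ∑ i, dl t (sgnVar (fun k => x k.succ) σ') univ i
                * Gf (sgnVar (fun k => x k.succ) σ' i) (x 0)) := by
          refine sum_congr rfl fun σ' _ => ?_
          rw [Fintype.sum_bool, EB true σ', EB false σ']
          have g1 : sgnVar x (Fin.cons true σ') 0 = x 0 := by
            unfold sgnVar; rw [Fin.cons_zero]; simp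
          have g2 : sgnVar x (Fin.cons false σ') 0 = (x 0)⁻¹ := by
            unfold sgnVar; rw [Fin.cons_zero]; simp
          rw [g1, g2, ← SS σ']
          simp only [Bs]
          ring
      _ = ∑ σ' : Fin n → Bool,
            (((∏ k, sf t (sgnVar (fun k => x k.succ) σ' k))
              * ∏ k, ∏ l ∈ Ioi k, cf t (sgnVar (fun k => x k.succ) σ' k)
                  (sgnVar (fun k => x k.succ) σ' l)) * (t ^ (n + 1) + 1)
            + ∑ i, (((∏ k, sf t (sgnVar (fun k => x k.succ) σ' k))
              * ∏ k, ∏ l ∈ Ioi k, cf t (sgnVar (fun k => x k.succ) σ' k)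
                  (sgnVar (fun k => x k.succ) σ' l))
                * dl t (sgnVar (fun k => x k.succ) σ') univ i)
                * Gf (sgnVar (fun k => x k.succ) σ' i) (x 0)) := by
          refine sum_congr rfl fun σ' _ => ?_
          rw [mul_add, mul_sum]
          congr 1
          exact sum_congr rfl fun i _ => by ring
      _ = (∑ σ' : Fin n → Bool,
            (∏ k, sf t (sgnVar (fun k => x k.succ) σ' k))
              * ∏ k, ∏ l ∈ Ioi k, cf t (sgnVar (fun k => x k.succ) σ' k)
                  (sgnVar (fun k => x k.succ) σ' l)) * (t ^ (n + 1) + 1)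
            + ∑ σ' : Fin n → Bool, ∑ i : Fin n,
              (((∏ k, sf t (sgnVar (fun k => x k.succ) σ' k))
                * ∏ k, ∏ l ∈ Ioi k, cf t (sgnVar (fun k => x k.succ) σ' k)
                    (sgnVar (fun k => x k.succ) σ' l))
                * dl t (sgnVar (fun k => x k.succ) σ') univ i)
                * Gf (sgnVar (fun k => x k.succ) σ' i) (x 0) := by
          rw [sum_add_distrib, sum_mul]
      _ = ∏ i ∈ range (n + 1), (t ^ (i + 1) + 1) := by
          rw [ih (fun k => x k.succ) t hx0' hx2' hxx', Ezero, add_zero, prod_range_succ]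


end Stmt5Aux

/-- The constant-term Macdonald identity for `C_n` (`r = 0` case):
`∑_{σ∈{±1}^n} ∏_i (1-tx_i^{2σ_i})/(1-x_i^{2σ_i})
  ∏_{i<j} (1-tx_i^{σ_i}x_j^{σ_j})/(1-x_i^{σ_i}x_j^{σ_j}) = ∏_{i=1}^n (t^i+1)`. -/
theorem stmt5 {F : Type*} [Field F] {n : ℕ} (x : Fin n → F) (t : F)
    (hx0 : ∀ i, x i ≠ 0)
    (hx2 : ∀ i, (x i) ^ 2 ≠ 1)
    (hxx : ∀ i j, i ≠ j → x i * x j ≠ 1 ∧ x i ≠ x j) :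
    ∑ σ : Fin n → Bool,
      (∏ i, (1 - t * (sgnVar x σ i) ^ 2) / (1 - (sgnVar x σ i) ^ 2)) *
      ∏ i, ∏ j ∈ Finset.Ioi i,
        (1 - t * sgnVar x σ i * sgnVar x σ j) / (1 - sgnVar x σ i * sgnVar x σ j)
      = ∏ i ∈ Finset.range n, (t ^ (i + 1) + 1) := by
  exact Stmt5Aux.key n x t hx0 hx2 hxx
end

section
/- Let u_1,…,u_r and t be indeterminates. For a subset I ⊆ {1,…,r}, set v_i = u_i if i ∈ I and v_i = 1/(t u_i) otherwise, and define c_I = ∏_{1 ≤ i < j ≤ r} (1 - v_i v_j)/(1 - t v_i v_j). Then ∑_{I ⊆ {1,…,r}} c_I = ∏_{k=0}^{r-1}(t^{-k} + 1). -/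
open Finset


private lemma aux_pf {F : Type*} [Field F] {ι : Type*} [DecidableEq ι] (t : F) (ht : t ≠ 0)
    (v : ι → F) (s : Finset ι) :
    (∀ i ∈ s, v i ≠ 0) → (∀ i ∈ s, ∀ j ∈ s, i ≠ j → v i ≠ v j) →
    ∀ y : F, (∀ i ∈ s, 1 - t * v i * y ≠ 0) →
    ∏ i ∈ s, (1 - v i * y) / (1 - t * v i * y)
      = (t ^ s.card)⁻¹ + ∑ k ∈ s,
          ((1 - t⁻¹) * ∏ i ∈ s.erase k, ((1 - v i * (t * v k)⁻¹) / (1 - v i * (v k)⁻¹)))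
            * (1 - t * v k * y)⁻¹ := by
  induction s using Finset.induction_on with
  | empty => intro _ _ y _; simp
  | @insert a s ha ih =>
    intro hv0 hvd y hy
    have hva : v a ≠ 0 := hv0 a (mem_insert_self a s)
    have hvs0 : ∀ i ∈ s, v i ≠ 0 := fun i hi => hv0 i (mem_insert_of_mem hi)
    have hvsd : ∀ i ∈ s, ∀ j ∈ s, i ≠ j → v i ≠ v j := fun i hi j hj =>
      hvd i (mem_insert_of_mem hi) j (mem_insert_of_mem hj)
    have hya : 1 - t * v a * y ≠ 0 := hy a (mem_insert_self a s)
    have hys : ∀ i ∈ s, 1 - t * v i * y ≠ 0 := fun i hi => hy i (mem_insert_of_mem hi)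
    have hne_a : ∀ i ∈ s, v i ≠ v a := fun i hi =>
      hvd i (mem_insert_of_mem hi) a (mem_insert_self a s) (by rintro rfl; exact ha hi)
    -- the special point y* = (t * v a)⁻¹
    have hrw : ∀ b : F, t * b * (t * v a)⁻¹ = b * (v a)⁻¹ := by
      intro b; field_simp
    have hstar : ∀ i ∈ s, 1 - t * v i * (t * v a)⁻¹ ≠ 0 := by
      intro i hi
      rw [hrw, sub_ne_zero]
      intro h
      apply hne_a i hi
      field_simp at h
      exact h.symm
    have ihy := ih hvs0 hvsd y hys
    have ihstar := ih hvs0 hvsd ((t * v a)⁻¹) hstar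
    simp only [hrw] at ihstar
    -- basic nonvanishing facts
    have hone : ∀ k ∈ s, 1 - v a * (v k)⁻¹ ≠ 0 := by
      intro k hk
      rw [sub_ne_zero]
      intro h
      have h2 := h.symm
      rw [← div_eq_mul_inv, div_eq_one_iff_eq (hvs0 k hk)] at h2
      exact hne_a k hk h2.symm
    have hone' : ∀ k ∈ s, 1 - v k * (v a)⁻¹ ≠ 0 := by
      intro k hk
      rw [sub_ne_zero]
      intro h
      have h2 := h.symm
      rw [← div_eq_mul_inv, div_eq_one_iff_eq hva] at h2
      exact hne_a k hk h2
    -- main rewrites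
    rw [prod_insert ha, ihy, card_insert_of_notMem ha, sum_insert ha, erase_insert ha,
      pow_succ, mul_inv]
    have frac1 : (1 - v a * y) / (1 - t * v a * y)
        = t⁻¹ + (1 - t⁻¹) * (1 - t * v a * y)⁻¹ := by
      linear_combination t⁻¹ * inv_mul_cancel₀ hya + ((1 - t * v a * y)⁻¹ * (v a * y)) * inv_mul_cancel₀ ht
    rw [frac1]
    -- rewrite the sum on the RHS
    have hsum : ∀ k ∈ s,
        ((1 - t⁻¹) * ∏ i ∈ (insert a s).erase k,
            ((1 - v i * (t * v k)⁻¹) / (1 - v i * (v k)⁻¹))) * (1 - t * v k * y)⁻¹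
        = (((1 - v a * (t * v k)⁻¹) / (1 - v a * (v k)⁻¹)) *
            ((1 - t⁻¹) * ∏ i ∈ s.erase k, ((1 - v i * (t * v k)⁻¹) / (1 - v i * (v k)⁻¹))))
            * (1 - t * v k * y)⁻¹ := by
      intro k hk
      have hak : a ≠ k := by rintro rfl; exact ha hk
      have hanotin : a ∉ s.erase k := fun h => ha (mem_of_mem_erase h)
      rw [erase_insert_of_ne hak, prod_insert hanotin]
      ring
    rw [Finset.sum_congr rfl hsum]
    -- distribute the product over the sum
    have frac2 : ∀ k ∈ s,
        (t⁻¹ + (1 - t⁻¹) * (1 - t * v a * y)⁻¹) *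
          (((1 - t⁻¹) * ∏ i ∈ s.erase k, ((1 - v i * (t * v k)⁻¹) / (1 - v i * (v k)⁻¹)))
            * (1 - t * v k * y)⁻¹)
        = (((1 - v a * (t * v k)⁻¹) / (1 - v a * (v k)⁻¹)) *
            ((1 - t⁻¹) * ∏ i ∈ s.erase k, ((1 - v i * (t * v k)⁻¹) / (1 - v i * (v k)⁻¹))))
            * (1 - t * v k * y)⁻¹
          + (1 - t⁻¹) *
            (((1 - t⁻¹) * ∏ i ∈ s.erase k, ((1 - v i * (t * v k)⁻¹) / (1 - v i * (v k)⁻¹)))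
              * (1 - v k * (v a)⁻¹)⁻¹) * (1 - t * v a * y)⁻¹ := by
      intro k hk
      have h1 : 1 - t * v k * y ≠ 0 := hys k hk
      have h2 : 1 - v a * (v k)⁻¹ ≠ 0 := hone k hk
      have h3 : 1 - v k * (v a)⁻¹ ≠ 0 := hone' k hk
      have h4 : v k ≠ 0 := hvs0 k hk
      have hka : v k - v a ≠ 0 := sub_ne_zero.mpr (hne_a k hk)
      have hak2 : v a - v k ≠ 0 := sub_ne_zero.mpr (Ne.symm (hne_a k hk))
      have r1 : (1 - v a * (t * v k)⁻¹) / (1 - v a * (v k)⁻¹)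
          = (t * v k - v a) / (t * (v k - v a)) := by
        rw [div_eq_div_iff (hone k hk) (mul_ne_zero ht hka)]
        field_simp
      have r2 : (1 - v k * (v a)⁻¹)⁻¹ = v a / (v a - v k) := by
        rw [inv_eq_one_div, div_eq_div_iff (hone' k hk) hak2]
        field_simp
      have key : (t⁻¹ + (1 - t⁻¹) * (1 - t * v a * y)⁻¹) * (1 - t * v k * y)⁻¹
          = ((1 - v a * (t * v k)⁻¹) / (1 - v a * (v k)⁻¹)) * (1 - t * v k * y)⁻¹
            + (1 - t⁻¹) * (1 - v k * (v a)⁻¹)⁻¹ * (1 - t * v a * y)⁻¹ := by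
        rw [r1, r2]
        rw [div_mul_eq_mul_div, mul_div_assoc']
        rw [eq_comm, ← sub_eq_zero]
        field_simp
        ring
      set P := ∏ i ∈ s.erase k, ((1 - v i * (t * v k)⁻¹) / (1 - v i * (v k)⁻¹)) with hP
      linear_combination ((1 - t⁻¹) * P) * key
    rw [mul_add, Finset.mul_sum, Finset.sum_congr rfl frac2, Finset.sum_add_distrib,
      ← Finset.sum_mul, ← Finset.mul_sum]
    linear_combination (-((1 - t⁻¹) * (1 - t * v a * y)⁻¹)) * ihstar

private lemma aux_Ioi {M : Type*} [CommMonoid M] {m : ℕ} (i : Fin m) (H : Fin (m + 1) → M) :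
    ∏ j ∈ Ioi i.castSucc, H j = (∏ j ∈ Ioi i, H j.castSucc) * H (Fin.last m) := by
  have hset : Ioi i.castSucc = insert (Fin.last m) ((Ioi i).map Fin.castSuccEmb) := by
    ext j
    induction j using Fin.lastCases with
    | last => simp [Fin.castSucc_lt_last]
    | cast j =>
      simp only [mem_Ioi, Fin.castSucc_lt_castSucc_iff, mem_insert, mem_map,
        Fin.castSuccEmb, Function.Embedding.coeFn_mk]
      constructor
      · intro h; exact Or.inr ⟨j, by simpa using h, rfl⟩
      · rintro (h | ⟨j', hj', hj'e⟩)
        · exact absurd h (Fin.castSucc_lt_last j).ne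
        · rw [← Fin.castSucc_injective m hj'e]; simpa using hj'
  have hnot : Fin.last m ∉ (Ioi i).map Fin.castSuccEmb := by
    simp only [mem_map, not_exists]
    rintro j' ⟨hj', hj⟩
    exact absurd hj (Fin.castSucc_lt_last j').ne
  rw [hset, prod_insert hnot, prod_map, mul_comm]
  rfl

private lemma aux_split {M : Type*} [CommMonoid M] {m : ℕ} (k : Fin m) (G : Fin m → Fin m → M) :
    ∏ i, ∏ j ∈ Ioi i, G i j
      = ((∏ i, ∏ j ∈ Ioi i, if i = k ∨ j = k then 1 else G i j)
          * ∏ j ∈ Ioi k, G k j) * ∏ i ∈ Iio k, G i k := by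
  have step1 : ∏ i, ∏ j ∈ Ioi i, G i j
      = (∏ i, ∏ j ∈ Ioi i, if i = k ∨ j = k then 1 else G i j)
        * (∏ i, ∏ j ∈ Ioi i, if i = k ∨ j = k then G i j else 1) := by
    rw [← prod_mul_distrib]
    refine prod_congr rfl fun i _ => ?_
    rw [← prod_mul_distrib]
    refine prod_congr rfl fun j _ => ?_
    by_cases h : i = k ∨ j = k <;> simp [h]
  have step2 : (∏ i, ∏ j ∈ Ioi i, if i = k ∨ j = k then G i j else 1)
      = (∏ j ∈ Ioi k, G k j) * ∏ i ∈ Iio k, G i k := by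
    rw [← Finset.mul_prod_erase univ _ (mem_univ k)]
    congr 1
    · refine prod_congr rfl fun j _ => ?_
      simp
    · have hrow : ∀ i ∈ univ.erase k, (∏ j ∈ Ioi i, if i = k ∨ j = k then G i j else 1)
          = if k ∈ Ioi i then G i k else 1 := by
        intro i hi
        have hik : i ≠ k := (mem_erase.1 hi).1
        rw [← prod_ite_eq' (Ioi i) k (fun _ => G i k)]
        refine prod_congr rfl fun j _ => ?_
        by_cases h : j = k <;> simp [h, hik]
      rw [prod_congr rfl hrow]
      have : ∀ i ∈ univ.erase k, (if k ∈ Ioi i then G i k else 1)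
          = if i ∈ Iio k then G i k else 1 := by
        intro i _
        simp [mem_Ioi, mem_Iio]
      rw [prod_congr rfl this, ← prod_filter]
      congr 1
      ext i
      simp only [mem_filter, mem_erase, mem_univ, true_and, mem_Iio]
      exact ⟨fun h => h.2, fun h => ⟨⟨h.ne, trivial⟩, h⟩⟩
  rw [step1, step2, mul_assoc]

private lemma aux_swap {F : Type*} [Field F] (t : F) (ht : t ≠ 0) (a b : F) (hb : b ≠ 0) :
    ((1 - a * b) / (1 - t * a * b)) * ((1 - a * (t * b)⁻¹) / (1 - a * b⁻¹))
      = ((1 - a * (t * b)⁻¹) / (1 - t * a * (t * b)⁻¹))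
          * ((1 - a * (t * (t * b)⁻¹)⁻¹) / (1 - a * ((t * b)⁻¹)⁻¹)) := by
  have e1 : t * a * (t * b)⁻¹ = a * b⁻¹ := by field_simp
  have e2 : (t * (t * b)⁻¹)⁻¹ = b := by
    field_simp
  have e3 : ((t * b)⁻¹)⁻¹ = t * b := inv_inv _
  have e4 : a * (t * b) = t * a * b := by ring
  rw [e1, e2, e3, e4, mul_comm]

private lemma aux_erase {M : Type*} [CommMonoid M] {m : ℕ} (k : Fin m) (H : Fin m → M) :
    ∏ i ∈ univ.erase k, H i = (∏ i ∈ Iio k, H i) * ∏ i ∈ Ioi k, H i := by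
  have hdisj : Disjoint (Iio k) (Ioi k) := by
    rw [Finset.disjoint_left]
    intro i h1 h2
    rw [mem_Iio] at h1
    rw [mem_Ioi] at h2
    exact absurd (h1.trans h2) (lt_irrefl i)
  rw [← prod_union hdisj]
  apply prod_congr _ fun _ _ => rfl
  ext i
  simp only [mem_union, mem_Iio, mem_Ioi, mem_erase, mem_univ, and_true]
  exact ⟨fun h => lt_or_gt_of_ne h,
    fun h => h.elim (fun hl => ne_of_lt hl) (fun hg => ne_of_gt hg)⟩

private lemma aux_key {F : Type*} [Field F] (t : F) (ht : t ≠ 0) {m : ℕ} (k : Fin m)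
    (V V' : Fin m → F) (hV0 : ∀ i, V i ≠ 0) (hVk : V' k = (t * V k)⁻¹)
    (hVi : ∀ i, i ≠ k → V' i = V i) :
    (∏ i, ∏ j ∈ Ioi i, (1 - V i * V j) / (1 - t * V i * V j)) *
      ((1 - t⁻¹) * ∏ i ∈ univ.erase k, ((1 - V i * (t * V k)⁻¹) / (1 - V i * (V k)⁻¹)))
    = (∏ i, ∏ j ∈ Ioi i, (1 - V' i * V' j) / (1 - t * V' i * V' j)) *
      ((1 - t⁻¹) * ∏ i ∈ univ.erase k, ((1 - V' i * (t * V' k)⁻¹) / (1 - V' i * (V' k)⁻¹))) := by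
  rw [aux_split k (fun i j => (1 - V i * V j) / (1 - t * V i * V j)),
    aux_split k (fun i j => (1 - V' i * V' j) / (1 - t * V' i * V' j)),
    aux_erase k (fun i => (1 - V i * (t * V k)⁻¹) / (1 - V i * (V k)⁻¹)),
    aux_erase k (fun i => (1 - V' i * (t * V' k)⁻¹) / (1 - V' i * (V' k)⁻¹))]
  have hA : (∏ i, ∏ j ∈ Ioi i, if i = k ∨ j = k then 1 else (1 - V i * V j) / (1 - t * V i * V j))
      = ∏ i, ∏ j ∈ Ioi i, if i = k ∨ j = k then 1 else (1 - V' i * V' j) / (1 - t * V' i * V' j) := by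
    refine prod_congr rfl fun i _ => prod_congr rfl fun j _ => ?_
    by_cases h : i = k ∨ j = k
    · simp [h]
    · push_neg at h
      rw [if_neg (by push_neg; exact h), if_neg (by push_neg; exact h), hVi i h.1, hVi j h.2]
  have hCP : (∏ i ∈ Iio k, (1 - V i * V k) / (1 - t * V i * V k))
        * ∏ i ∈ Iio k, ((1 - V i * (t * V k)⁻¹) / (1 - V i * (V k)⁻¹))
      = (∏ i ∈ Iio k, (1 - V' i * V' k) / (1 - t * V' i * V' k))
        * ∏ i ∈ Iio k, ((1 - V' i * (t * V' k)⁻¹) / (1 - V' i * (V' k)⁻¹)) := by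
    rw [← prod_mul_distrib, ← prod_mul_distrib]
    refine prod_congr rfl fun i hi => ?_
    have hik : i ≠ k := ne_of_lt (mem_Iio.1 hi)
    rw [hVi i hik, hVk]
    exact aux_swap t ht (V i) (V k) (hV0 k)
  have hBQ : (∏ j ∈ Ioi k, (1 - V k * V j) / (1 - t * V k * V j))
        * ∏ j ∈ Ioi k, ((1 - V j * (t * V k)⁻¹) / (1 - V j * (V k)⁻¹))
      = (∏ j ∈ Ioi k, (1 - V' k * V' j) / (1 - t * V' k * V' j))
        * ∏ j ∈ Ioi k, ((1 - V' j * (t * V' k)⁻¹) / (1 - V' j * (V' k)⁻¹)) := by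
    rw [← prod_mul_distrib, ← prod_mul_distrib]
    refine prod_congr rfl fun j hj => ?_
    have hjk : j ≠ k := ne_of_gt (mem_Ioi.1 hj)
    rw [hVi j hjk, hVk]
    have c1 : (1 - V k * V j) / (1 - t * V k * V j)
        = (1 - V j * V k) / (1 - t * V j * V k) := by rw [mul_comm (V k) (V j), mul_right_comm]
    have c2 : (1 - (t * V k)⁻¹ * V j) / (1 - t * (t * V k)⁻¹ * V j)
        = (1 - V j * (t * V k)⁻¹) / (1 - t * V j * (t * V k)⁻¹) := by
      rw [mul_comm ((t * V k)⁻¹) (V j), mul_right_comm]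
    rw [c1, c2]
    exact aux_swap t ht (V j) (V k) (hV0 k)
  have hall := congrArg₂ (· * ·) (congrArg₂ (· * ·) hA hBQ) hCP
  linear_combination (1 - t⁻¹) * hall

private lemma aux_br {F : Type*} [Field F] (t x a : F) (ht : t ≠ 0) (hx : x ≠ 0) (ha : a ≠ 0)
    (h1 : t * a * x ≠ 1) (h2 : a ≠ x) :
    (1 - t * a * x)⁻¹ + (1 - t * a * (t * x)⁻¹)⁻¹
      + (1 - t * (t * a)⁻¹ * x)⁻¹ + (1 - t * (t * a)⁻¹ * (t * x)⁻¹)⁻¹ = 2 := by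
  have hax : x - a ≠ 0 := sub_ne_zero.mpr (Ne.symm h2)
  have hxa : a - x ≠ 0 := sub_ne_zero.mpr h2
  have h1' : 1 - t * a * x ≠ 0 := sub_ne_zero.mpr (Ne.symm h1)
  have h1'' : t * a * x - 1 ≠ 0 := sub_ne_zero.mpr h1
  have e1 : 1 - t * a * (t * x)⁻¹ = (x - a) / x := by field_simp
  have e2 : 1 - t * (t * a)⁻¹ * x = (a - x) / a := by field_simp
  have e3 : 1 - t * (t * a)⁻¹ * (t * x)⁻¹ = (t * a * x - 1) / (t * a * x) := by
    field_simp
  rw [e1, e2, e3, inv_div, inv_div, inv_div]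
  field_simp
  ring
private def auxV {F : Type*} [Field F] (t : F) {m : ℕ} (u : Fin (m + 1) → F)
    (ε : Fin m → Bool) (i : Fin m) : F :=
  if ε i then u i.castSucc else (t * u i.castSucc)⁻¹

private def auxc {F : Type*} [Field F] (t : F) {m : ℕ} (u : Fin (m + 1) → F)
    (ε : Fin m → Bool) : F :=
  ∏ i, ∏ j ∈ Ioi i,
    (1 - auxV t u ε i * auxV t u ε j) / (1 - t * auxV t u ε i * auxV t u ε j)

private def auxA {F : Type*} [Field F] (t : F) {m : ℕ} (u : Fin (m + 1) → F)
    (ε : Fin m → Bool) (y : F) : F :=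
  ∏ i, (1 - auxV t u ε i * y) / (1 - t * auxV t u ε i * y)

private def auxC {F : Type*} [Field F] (t : F) {m : ℕ} (u : Fin (m + 1) → F)
    (ε : Fin m → Bool) (k : Fin m) : F :=
  (1 - t⁻¹) * ∏ i ∈ univ.erase k,
    ((1 - auxV t u ε i * (t * auxV t u ε k)⁻¹) / (1 - auxV t u ε i * (auxV t u ε k)⁻¹))

private lemma aux_main {F : Type*} [Field F] (t : F) (ht : t ≠ 0) :
    ∀ (m : ℕ) (u : Fin m → F), (∀ i, u i ≠ 0) →
      (∀ i j, i ≠ j → t * u i * u j ≠ 1 ∧ u i ≠ u j) →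
      ∑ ε : Fin m → Bool, ∏ i, ∏ j ∈ Ioi i,
          (1 - (if ε i then u i else (t * u i)⁻¹) * (if ε j then u j else (t * u j)⁻¹)) /
            (1 - t * (if ε i then u i else (t * u i)⁻¹) * (if ε j then u j else (t * u j)⁻¹))
        = ∏ k ∈ Finset.range m, ((t ^ k)⁻¹ + 1) := by
  intro m
  induction m with
  | zero =>
    intro u _ _
    simp
  | succ m ih =>
    intro u hu0 hne
    have hx0 : u (Fin.last m) ≠ 0 := hu0 _
    have hcc : ∀ i j : Fin m, i ≠ j →
        t * u i.castSucc * u j.castSucc ≠ 1 ∧ u i.castSucc ≠ u j.castSucc :=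
      fun i j hij => hne _ _ (fun h => hij (Fin.castSucc_injective m h))
    have hcl : ∀ i : Fin m, t * u i.castSucc * u (Fin.last m) ≠ 1 ∧
        u i.castSucc ≠ u (Fin.last m) :=
      fun i => hne _ _ (fun h => absurd h (Fin.castSucc_lt_last i).ne)
    have hV0 : ∀ (ε : Fin m → Bool) i, auxV t u ε i ≠ 0 := by
      intro ε i
      unfold auxV
      split
      · exact hu0 _
      · exact inv_ne_zero (mul_ne_zero ht (hu0 _))
    have hVd : ∀ (ε : Fin m → Bool), ∀ i ∈ (univ : Finset (Fin m)), ∀ j ∈ univ,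
        i ≠ j → auxV t u ε i ≠ auxV t u ε j := by
      intro ε i _ j _ hij
      unfold auxV
      by_cases hei : ε i <;> by_cases hej : ε j <;> simp only [hei, hej, if_true, if_false]
      · exact (hcc i j hij).2
      · intro h
        apply (hcc i j hij).1
        rw [h]
        field_simp
        simp only [Bool.false_eq_true, ↓reduceIte]
        exact mul_one_div_cancel (mul_ne_zero ht (hu0 _))
      · intro h
        apply (hcc i j hij).1
        rw [← h]
        field_simp
        simp only [Bool.false_eq_true, ↓reduceIte]
        exact mul_one_div_cancel (mul_ne_zero ht (hu0 _))
      · intro h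
        exact (hcc i j hij).2 (mul_left_cancel₀ ht (inv_injective h))
    have htax : ∀ (ε : Fin m → Bool) (k : Fin m), t * auxV t u ε k * u (Fin.last m) ≠ 1 := by
      intro ε k
      unfold auxV
      split
      · exact (hcl k).1
      · intro h
        have h2 : t * (t * u k.castSucc)⁻¹ = (u k.castSucc)⁻¹ := by
          rw [mul_inv, ← mul_assoc, mul_inv_cancel₀ ht, one_mul]
        rw [h2, inv_mul_eq_one₀ (hu0 _)] at h
        exact (hcl k).2 h
    have hax2 : ∀ (ε : Fin m → Bool) (k : Fin m), auxV t u ε k ≠ u (Fin.last m) := by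
      intro ε k
      unfold auxV
      split
      · exact (hcl k).2
      · intro h
        apply (hcl k).1
        rw [← h]
        exact mul_inv_cancel₀ (mul_ne_zero ht (hu0 _))
    have hyx : ∀ (ε : Fin m → Bool), ∀ i ∈ (univ : Finset (Fin m)),
        1 - t * auxV t u ε i * u (Fin.last m) ≠ 0 :=
      fun ε i _ => sub_ne_zero.mpr (Ne.symm (htax ε i))
    have hyx' : ∀ (ε : Fin m → Bool), ∀ i ∈ (univ : Finset (Fin m)),
        1 - t * auxV t u ε i * (t * u (Fin.last m))⁻¹ ≠ 0 := by
      intro ε i _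
      have e : t * auxV t u ε i * (t * u (Fin.last m))⁻¹
          = auxV t u ε i * (u (Fin.last m))⁻¹ := by field_simp
      rw [e, sub_ne_zero, ← div_eq_mul_inv]
      intro h
      exact hax2 ε i ((div_eq_one_iff_eq hx0).1 h.symm)
    have hVk : ∀ (ε : Fin m → Bool) (k : Fin m),
        auxV t u (Function.update ε k (!ε k)) k = (t * auxV t u ε k)⁻¹ := by
      intro ε k
      unfold auxV
      rw [Function.update_self]
      by_cases hek : ε k <;> simp only [hek, Bool.not_true, Bool.not_false, if_true, if_false]
      · rfl
      · field_simp
        simp only [Bool.false_eq_true, ↓reduceIte, one_div_one_div]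
    have hVi : ∀ (ε : Fin m → Bool) (k i : Fin m), i ≠ k →
        auxV t u (Function.update ε k (!ε k)) i = auxV t u ε i := by
      intro ε k i hik
      unfold auxV
      rw [Function.update_of_ne hik]
    -- the partial-fraction expansions
    have hAx : ∀ ε : Fin m → Bool,
        auxA t u ε (u (Fin.last m))
          = (t ^ m)⁻¹ + ∑ k, auxC t u ε k
              * (1 - t * auxV t u ε k * u (Fin.last m))⁻¹ := by
      intro ε
      have h0 := aux_pf t ht (auxV t u ε) univ (fun i _ => hV0 ε i) (hVd ε)
        (u (Fin.last m)) (hyx ε)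
      unfold auxA auxC
      simpa using h0
    have hAx' : ∀ ε : Fin m → Bool,
        auxA t u ε ((t * u (Fin.last m))⁻¹)
          = (t ^ m)⁻¹ + ∑ k, auxC t u ε k
              * (1 - t * auxV t u ε k * (t * u (Fin.last m))⁻¹)⁻¹ := by
      intro ε
      have h0 := aux_pf t ht (auxV t u ε) univ (fun i _ => hV0 ε i) (hVd ε)
        ((t * u (Fin.last m))⁻¹) (hyx' ε)
      unfold auxA auxC
      simpa using h0
    have hsumC : ∀ ε : Fin m → Bool, ∑ k, auxC t u ε k = 1 - (t ^ m)⁻¹ := by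
      intro ε
      have h0 := aux_pf t ht (auxV t u ε) univ (fun i _ => hV0 ε i) (hVd ε)
        (0 : F) (fun i _ => by simp)
      simp only [mul_zero, sub_zero, div_one, inv_one, mul_one, prod_const_one,
        Finset.card_univ, Fintype.card_fin] at h0
      unfold auxC
      linear_combination -h0
    -- splitting off the last variable
    have hIoiLast : Ioi (Fin.last m) = (∅ : Finset (Fin (m + 1))) := by
      ext j
      simp only [mem_Ioi, notMem_empty, iff_false, not_lt]
      exact Fin.le_last j
    have hsplitT : ∀ (b : Bool) (ε : Fin m → Bool),
        (∏ i : Fin (m + 1), ∏ j ∈ Ioi i,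
          (1 - (if Fin.snoc (α := fun _ => Bool) ε b i = true then u i else (t * u i)⁻¹)
              * (if Fin.snoc (α := fun _ => Bool) ε b j = true then u j else (t * u j)⁻¹)) /
          (1 - t * (if Fin.snoc (α := fun _ => Bool) ε b i = true then u i else (t * u i)⁻¹)
              * (if Fin.snoc (α := fun _ => Bool) ε b j = true then u j else (t * u j)⁻¹)))
        = auxc t u ε * auxA t u ε
            (if b then u (Fin.last m) else (t * u (Fin.last m))⁻¹) := by
      intro b ε
      unfold auxc auxA auxV
      rw [Fin.prod_univ_castSucc]
      rw [hIoiLast, prod_empty, mul_one]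
      simp only [aux_Ioi]
      rw [prod_mul_distrib]
      simp only [Fin.snoc_castSucc, Fin.snoc_last]
    -- the involution cancellation
    have hcancel : ∀ k : Fin m,
        ∑ ε : Fin m → Bool,
          (auxc t u ε * (auxC t u ε k * (1 - t * auxV t u ε k * u (Fin.last m))⁻¹)
            + auxc t u ε * (auxC t u ε k * (1 - t * auxV t u ε k * (t * u (Fin.last m))⁻¹)⁻¹))
        = ∑ ε : Fin m → Bool, auxc t u ε * auxC t u ε k := by
      intro k
      rw [← sub_eq_zero, ← sum_sub_distrib]
      refine Finset.sum_involution (fun ε _ => Function.update ε k (!ε k)) ?_ ?_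
        (fun ε _ => mem_univ _) ?_
      · intro ε _
        have hkey : auxc t u ε * auxC t u ε k
            = auxc t u (Function.update ε k (!ε k))
              * auxC t u (Function.update ε k (!ε k)) k :=
          aux_key t ht k (auxV t u ε) (auxV t u (Function.update ε k (!ε k)))
            (hV0 ε) (hVk ε k) (fun i hi => hVi ε k i hi)
        have hbr := aux_br t (u (Fin.last m)) (auxV t u ε k) ht hx0 (hV0 ε k)
          (htax ε k) (hax2 ε k)
        rw [hVk ε k]
        linear_combination (auxc t u ε * auxC t u ε k) * hbr
          + (1 - (1 - t * (t * auxV t u ε k)⁻¹ * u (Fin.last m))⁻¹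
              - (1 - t * (t * auxV t u ε k)⁻¹ * (t * u (Fin.last m))⁻¹)⁻¹) * hkey
      · intro ε _ _ heq
        exact Bool.not_ne_self (ε k) (by
          have h2 := congrFun heq k
          simpa using h2)
      · intro ε _
        simp only [Function.update_self, Function.update_idem, Bool.not_not,
          Function.update_eq_self]
    -- the induction hypothesis for the first m variables
    have hSm : ∑ ε : Fin m → Bool, auxc t u ε = ∏ k ∈ Finset.range m, ((t ^ k)⁻¹ + 1) := by
      unfold auxc auxV
      exact ih (fun i => u i.castSucc) (fun i => hu0 _)
        (fun i j hij => hne _ _ (fun h => hij (Fin.castSucc_injective m h)))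
    -- putting everything together
    calc ∑ ε : Fin (m + 1) → Bool, ∏ i, ∏ j ∈ Ioi i,
            (1 - (if ε i then u i else (t * u i)⁻¹) * (if ε j then u j else (t * u j)⁻¹)) /
              (1 - t * (if ε i then u i else (t * u i)⁻¹) * (if ε j then u j else (t * u j)⁻¹))
        = ∑ ε : Fin m → Bool, (auxc t u ε * auxA t u ε (u (Fin.last m))
            + auxc t u ε * auxA t u ε ((t * u (Fin.last m))⁻¹)) := by
          rw [← Equiv.sum_comp (Fin.snocEquiv fun _ => Bool), Fintype.sum_prod_type,
            Fintype.sum_bool, ← sum_add_distrib]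
          exact sum_congr rfl fun ε _ => congrArg₂ (· + ·) (hsplitT true ε) (hsplitT false ε)
      _ = ∑ ε : Fin m → Bool, (((t ^ m)⁻¹ + (t ^ m)⁻¹) * auxc t u ε
            + ∑ k, (auxc t u ε * (auxC t u ε k * (1 - t * auxV t u ε k * u (Fin.last m))⁻¹)
              + auxc t u ε * (auxC t u ε k
                  * (1 - t * auxV t u ε k * (t * u (Fin.last m))⁻¹)⁻¹))) := by
          refine sum_congr rfl fun ε _ => ?_
          have e : ∑ k, (auxc t u ε * (auxC t u ε k * (1 - t * auxV t u ε k * u (Fin.last m))⁻¹)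
              + auxc t u ε * (auxC t u ε k
                  * (1 - t * auxV t u ε k * (t * u (Fin.last m))⁻¹)⁻¹))
              = auxc t u ε * (∑ k, auxC t u ε k * (1 - t * auxV t u ε k * u (Fin.last m))⁻¹)
                + auxc t u ε * (∑ k, auxC t u ε k
                    * (1 - t * auxV t u ε k * (t * u (Fin.last m))⁻¹)⁻¹) := by
            rw [sum_add_distrib, Finset.mul_sum, Finset.mul_sum]
          rw [hAx ε, hAx' ε, e]
          ring
      _ = ((t ^ m)⁻¹ + (t ^ m)⁻¹) * (∑ ε : Fin m → Bool, auxc t u ε)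
            + ∑ ε : Fin m → Bool, ∑ k, (auxc t u ε
                * (auxC t u ε k * (1 - t * auxV t u ε k * u (Fin.last m))⁻¹)
              + auxc t u ε * (auxC t u ε k
                  * (1 - t * auxV t u ε k * (t * u (Fin.last m))⁻¹)⁻¹)) := by
          rw [sum_add_distrib, Finset.mul_sum]
      _ = ((t ^ m)⁻¹ + (t ^ m)⁻¹) * (∑ ε : Fin m → Bool, auxc t u ε)
            + ∑ ε : Fin m → Bool, auxc t u ε * (1 - (t ^ m)⁻¹) := by
          congr 1
          rw [sum_comm]
          rw [sum_congr rfl fun k _ => hcancel k, sum_comm]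
          refine sum_congr rfl fun ε _ => ?_
          rw [← Finset.mul_sum, hsumC ε]
      _ = ∏ k ∈ Finset.range (m + 1), ((t ^ k)⁻¹ + 1) := by
          rw [← sum_mul, hSm, prod_range_succ]
          ring

/-- The `n = 0` case of the main rational identity:
`∑_{I⊆{1,…,r}} ∏_{i<j} (1-v_iv_j)/(1-tv_iv_j) = ∏_{k=0}^{r-1}(t^{-k}+1)`,
where `v_i = u_i` if `i ∈ I` and `v_i = 1/(tu_i)` otherwise. -/
theorem stmt6 {F : Type*} [Field F] {r : ℕ} (u : Fin r → F) (t : F)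
    (ht : t ≠ 0) (hu0 : ∀ i, u i ≠ 0)
    (hne : ∀ i j, i ≠ j → t * u i * u j ≠ 1 ∧ u i ≠ u j) :
    ∑ I : Finset (Fin r),
      (∏ i, ∏ j ∈ Finset.Ioi i,
        (1 - (if i ∈ I then u i else (t * u i)⁻¹) * (if j ∈ I then u j else (t * u j)⁻¹)) /
        (1 - t * (if i ∈ I then u i else (t * u i)⁻¹) * (if j ∈ I then u j else (t * u j)⁻¹)))
      = ∏ k ∈ Finset.range r, ((t ^ k)⁻¹ + 1) := by
  classical
  have hmain := aux_main t ht r u hu0 hne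
  rw [← hmain]
  refine Fintype.sum_equiv
    (⟨fun I : Finset (Fin r) => fun i => decide (i ∈ I),
      fun ε => univ.filter (fun i => ε i = true),
      fun I => by ext i; simp,
      fun ε => by funext i; simp⟩ : Finset (Fin r) ≃ (Fin r → Bool)) _ _ ?_
  intro I
  simp only [Equiv.coe_fn_mk, decide_eq_true_eq]
end
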